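/- For mutually independent uniform M, K₁, K₂ on Z/nZ, the encrypted messages M ⊕ K₁ and M ⊕ K₂ are independent of each other. -/

import Mathlib

open MeasureTheory ProbabilityTheory

instance (n : ℕ) : MeasurableSpace (ZMod n) := ⊤
instance (n : ℕ) : MeasurableSingletonClass (ZMod n) := ⟨fun _ => trivial⟩

/-- For mutually independent uniform `M`, `K₁`, `K₂` on `ZMod n`, the encrypted messages
`M ⊕ K₁` and `M ⊕ K₂` are independent of each other. -/
theorem encrypted_messages_indep
    {Ω : Type*} [MeasurableSpace Ω] {μ : Measure Ω} [IsProbabilityMeasure μ]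
    {n : ℕ} [NeZero n] (M K₁ K₂ : Ω → ZMod n)
    (hM : Measurable M) (hK₁ : Measurable K₁) (hK₂ : Measurable K₂)
    (hIndep : iIndepFun ![M, K₁, K₂] μ)
    (hMunif : Measure.map M μ = (PMF.uniformOfFintype (ZMod n)).toMeasure)
    (hK₁unif : Measure.map K₁ μ = (PMF.uniformOfFintype (ZMod n)).toMeasure)
    (hK₂unif : Measure.map K₂ μ = (PMF.uniformOfFintype (ZMod n)).toMeasure) :
    IndepFun (fun ω => M ω + K₁ ω) (fun ω => M ω + K₂ ω) μ := by
  set c : ENNReal := (n : ENNReal)⁻¹ with hc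
  have hcard : (Fintype.card (ZMod n) : ENNReal) = (n : ENNReal) := by
    rw [ZMod.card]
  have hn0 : (n : ENNReal) ≠ 0 := by
    exact_mod_cast Nat.cast_ne_zero.2 (NeZero.ne n)
  have hntop : (n : ENNReal) ≠ ⊤ := ENNReal.natCast_ne_top n
  have hmulinv : (n : ENNReal) * c = 1 := ENNReal.mul_inv_cancel hn0 hntop
  -- single-variable uniform values
  have hunif : ∀ (X : Ω → ZMod n), Measurable X →
      Measure.map X μ = (PMF.uniformOfFintype (ZMod n)).toMeasure →
      ∀ x, μ (X ⁻¹' {x}) = c := by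
    intro X hX hXu x
    have := congrArg (fun m : Measure (ZMod n) => m {x}) hXu
    simp only [Measure.map_apply hX (measurableSet_singleton x)] at this
    rw [this, PMF.toMeasure_apply_singleton _ _ (measurableSet_singleton x),
      PMF.uniformOfFintype_apply, hcard]
  have hMm := hunif M hM hMunif
  have hK₁m := hunif K₁ hK₁ hK₁unif
  have hK₂m := hunif K₂ hK₂ hK₂unif
  -- triple intersection
  have htriple : ∀ x y z : ZMod n,
      μ (M ⁻¹' {x} ∩ (K₁ ⁻¹' {y} ∩ K₂ ⁻¹' {z})) = c * (c * c) := by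
    intro x y z
    have h := hIndep.measure_inter_preimage_eq_mul (S := Finset.univ)
      (sets := ![{x}, {y}, {z}]) (fun i _ => by fin_cases i <;> exact measurableSet_singleton _)
    simp only [Fin.prod_univ_three] at h
    have hset : (⋂ i ∈ (Finset.univ : Finset (Fin 3)), ![M, K₁, K₂] i ⁻¹' ![{x}, {y}, {z}] i)
        = M ⁻¹' {x} ∩ (K₁ ⁻¹' {y} ∩ K₂ ⁻¹' {z}) := by
      ext ω
      simp [Fin.forall_fin_succ, Set.mem_iInter, and_assoc]
    rw [hset] at h
    rw [h]
    simp only [Matrix.cons_val_zero, Matrix.cons_val_one, Matrix.head_cons,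
      Matrix.cons_val_two, Matrix.tail_cons]
    rw [hMm x, hK₁m y, hK₂m z]
    ring
  -- pairwise intersections
  have hpairMK₁ : ∀ x y : ZMod n, μ (M ⁻¹' {x} ∩ K₁ ⁻¹' {y}) = c * c := by
    intro x y
    have h := (hIndep.indepFun (i := 0) (j := 1) (by decide)).measure_inter_preimage_eq_mul
      {x} {y} (measurableSet_singleton _) (measurableSet_singleton _)
    simpa [hMm x, hK₁m y] using h
  have hpairMK₂ : ∀ x y : ZMod n, μ (M ⁻¹' {x} ∩ K₂ ⁻¹' {y}) = c * c := by
    intro x y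
    have h := (hIndep.indepFun (i := 0) (j := 2) (by decide)).measure_inter_preimage_eq_mul
      {x} {y} (measurableSet_singleton _) (measurableSet_singleton _)
    simpa [hMm x, hK₂m y] using h
  -- decomposition of the sum events
  have hdecomp : ∀ (K : Ω → ZMod n) (a : ZMod n),
      (fun ω => M ω + K ω) ⁻¹' {a} = ⋃ m : ZMod n, (M ⁻¹' {m} ∩ K ⁻¹' {a - m}) := by
    intro K a
    ext ω
    simp only [Set.mem_preimage, Set.mem_singleton_iff, Set.mem_iUnion, Set.mem_inter_iff]
    constructor
    · intro h; exact ⟨M ω, rfl, by rw [← h]; ring_nf⟩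
    · rintro ⟨m, hm, hk⟩
      rw [hm, hk]; ring
  have hdisj : ∀ (K : Ω → ZMod n) (a : ZMod n),
      Pairwise (Function.onFun Disjoint (fun m : ZMod n => M ⁻¹' {m} ∩ K ⁻¹' {a - m})) := by
    intro K a m₁ m₂ hne
    refine Set.disjoint_left.2 ?_
    rintro ω ⟨h1, _⟩ ⟨h2, _⟩
    exact hne (by rw [← h1, ← h2])
  have hsum : ∀ (K : Ω → ZMod n), Measurable K → ∀ (a : ZMod n),
      (∀ x y : ZMod n, μ (M ⁻¹' {x} ∩ K ⁻¹' {y}) = c * c) →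
      μ ((fun ω => M ω + K ω) ⁻¹' {a}) = c := by
    intro K hKmeas a hpair
    rw [hdecomp K a, measure_iUnion (hdisj K a)
      (fun m => (hM (measurableSet_singleton _)).inter (hKmeas (measurableSet_singleton _)))]
    rw [tsum_fintype]
    simp only [hpair, Finset.sum_const, Finset.card_univ, nsmul_eq_mul, hcard]
    rw [← mul_assoc, hmulinv, one_mul]
  -- joint distribution
  rw [indepFun_iff_map_prod_eq_prod_map_map (show Measurable (fun ω => M ω + K₁ ω) from hM.add hK₁).aemeasurable (show Measurable (fun ω => M ω + K₂ ω) from hM.add hK₂).aemeasurable]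
  refine Measure.ext_of_singleton fun p => ?_
  obtain ⟨a, b⟩ := p
  have hab : ({(a, b)} : Set (ZMod n × ZMod n)) = {a} ×ˢ {b} := by
    simp [Set.prod_singleton]
  rw [hab, Measure.map_apply ((show Measurable (fun ω => M ω + K₁ ω) from hM.add hK₁).prodMk (show Measurable (fun ω => M ω + K₂ ω) from hM.add hK₂))
      ((measurableSet_singleton a).prod (measurableSet_singleton b)),
    Measure.prod_prod,
    Measure.map_apply (show Measurable (fun ω => M ω + K₁ ω) from hM.add hK₁) (measurableSet_singleton a),
    Measure.map_apply (show Measurable (fun ω => M ω + K₂ ω) from hM.add hK₂) (measurableSet_singleton b),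
    hsum K₁ hK₁ a hpairMK₁, hsum K₂ hK₂ b hpairMK₂]
  -- LHS: decompose the joint event
  have hjoint : (fun ω => (M ω + K₁ ω, M ω + K₂ ω)) ⁻¹' ({a} ×ˢ {b})
      = ⋃ m : ZMod n, (M ⁻¹' {m} ∩ (K₁ ⁻¹' {a - m} ∩ K₂ ⁻¹' {b - m})) := by
    ext ω
    simp only [Set.mem_preimage, Set.mem_prod, Set.mem_singleton_iff, Set.mem_iUnion,
      Set.mem_inter_iff]
    constructor
    · rintro ⟨h1, h2⟩
      exact ⟨M ω, rfl, by rw [← h1]; ring_nf, by rw [← h2]; ring_nf⟩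
    · rintro ⟨m, hm, hk1, hk2⟩
      constructor
      · rw [hm, hk1]; ring
      · rw [hm, hk2]; ring
  have hdisj2 : Pairwise (Function.onFun Disjoint
      (fun m : ZMod n => M ⁻¹' {m} ∩ (K₁ ⁻¹' {a - m} ∩ K₂ ⁻¹' {b - m}))) := by
    intro m₁ m₂ hne
    refine Set.disjoint_left.2 ?_
    rintro ω ⟨h1, _⟩ ⟨h2, _⟩
    exact hne (by rw [← h1, ← h2])
  rw [hjoint, measure_iUnion hdisj2 (fun m => (hM (measurableSet_singleton _)).inter
    ((hK₁ (measurableSet_singleton _)).inter (hK₂ (measurableSet_singleton _)))),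
    tsum_fintype]
  simp only [htriple, Finset.sum_const, Finset.card_univ, nsmul_eq_mul, hcard]
  rw [← mul_assoc, hmulinv, one_mul]
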